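/- If Σ_{n≥1} sup_{x∈(0,1)} e^{w(φ_n(x))} < ∞ (in particular, under hypothesis (H7)), then v(0) ≤ 0, where v(0) denotes the value at 0 of the C^k extension of v|_{J_0} to [0,a]. -/

import Mathlib

open Set Filter Topology Asymptotics MeasureTheory

noncomputable section

/-- The first passage time of `x` to the interval `(a,1)` under iteration of `T`
(`τ(x) = min {n ≥ 0 : Tⁿ x ∈ (a,1)}`). -/
def tau (T : ℝ → ℝ) (a : ℝ) (x : ℝ) : ℕ := sInf {n : ℕ | T^[n] x ∈ Set.Ioo a 1}

/-- The jump transformation `G(x) = T^{1+τ(x)}(x)` of `T` on `(a,1)`. -/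
def Gmap (T : ℝ → ℝ) (a : ℝ) (x : ℝ) : ℝ := T^[1 + tau T a x] x

/-- The sequence `a₀ = 1`, `a₁ = a`, `a_ℓ = ψ₀(a_{ℓ-1})`. -/
def aseq (ψ₀ : ℝ → ℝ) (a : ℝ) : ℕ → ℝ
  | 0 => 1
  | 1 => a
  | n + 2 => ψ₀ (aseq ψ₀ a (n + 1))

/-- The level sets `A_ℓ = (a_ℓ, a_{ℓ-1})` of the first passage function. -/
def Aset (ψ₀ : ℝ → ℝ) (a : ℝ) (ℓ : ℕ) : Set ℝ := Set.Ioo (aseq ψ₀ a ℓ) (aseq ψ₀ a (ℓ - 1))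

/-- The inverse branches `φ_ℓ = ψ₀^{ℓ-1} ∘ ψ₁` of the jump transformation. -/
def phib (ψ₀ ψ₁ : ℝ → ℝ) (ℓ : ℕ) : ℝ → ℝ := ψ₀^[ℓ - 1] ∘ ψ₁

/-- The induced potential `w(x) = ∑_{j=0}^{τ(x)} v(Tʲ x)`. -/
def indw (T : ℝ → ℝ) (a : ℝ) (v : ℝ → ℝ) (x : ℝ) : ℝ :=
  ∑ j ∈ Finset.range (tau T a x + 1), v (T^[j] x)

/-- The `C^h` norm `‖f‖_h = max_{0 ≤ j ≤ h} sup_{[0,1]} |f^{(j)}|` of a function on `[0,1]`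
(computed via the open interval `(0,1)`). -/
noncomputable def nrm {E : Type*} [NormedAddCommGroup E] [NormedSpace ℝ E]
    (h : ℕ) (f : ℝ → E) : ℝ :=
  (Finset.range (h + 1)).sup' Finset.nonempty_range_add_one fun j =>
    sSup ((fun x => ‖iteratedDerivWithin j f (Set.Ioo (0 : ℝ) 1) x‖) '' Set.Ioo (0 : ℝ) 1)

/-- Hypotheses (H1)–(H5) on the parabolic map `T`. -/
structure Hyp (T : ℝ → ℝ) (a : ℝ) (ψ₀ ψ₁ : ℝ → ℝ) (r : ℕ∞) (c α ε ρ : ℝ) : Prop where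
  ha : a ∈ Set.Ioo (0 : ℝ) 1
  hmaps : Set.MapsTo T (Set.Icc 0 1) (Set.Icc 0 1)
  mono0 : StrictMonoOn T (Set.Ioo 0 a)
  mono1 : StrictMonoOn T (Set.Ioo a 1) ∨ StrictAntiOn T (Set.Ioo a 1)
  full0 : closure (T '' Set.Ioo 0 a) = Set.Icc 0 1
  full1 : closure (T '' Set.Ioo a 1) = Set.Icc 0 1
  hr : 2 ≤ r
  smooth0 : ContDiffOn ℝ r T (Set.Ioc 0 a)
  smooth1 : ContDiffOn ℝ r T (Set.Icc a 1)
  inv0 : ∀ y ∈ Set.Ioo (0 : ℝ) 1, ψ₀ y ∈ Set.Ioo 0 a ∧ T (ψ₀ y) = y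
  inv0' : ∀ x ∈ Set.Ioo 0 a, ψ₀ (T x) = x
  inv1 : ∀ y ∈ Set.Ioo (0 : ℝ) 1, ψ₁ y ∈ Set.Ioo a 1 ∧ T (ψ₁ y) = y
  inv1' : ∀ x ∈ Set.Ioo a 1, ψ₁ (T x) = x
  hc : 0 < c
  hα : 0 < α
  fix0 : T 0 = 0
  dT0 : derivWithin T (Set.Icc 0 1) 0 = 1
  asymp : Filter.Tendsto (fun x => (deriv T x - 1) / (c * x ^ α)) (nhdsWithin 0 (Set.Ioi 0)) (nhds 1)
  hε : 0 < ε
  hρ : 1 < ρ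
  dmono : StrictMonoOn (deriv T) (Set.Ioo 0 ε)
  expand : ∀ x ∈ Set.Ico ε a ∪ Set.Ioo a 1, ρ ≤ |deriv T x|

/-- Hypothesis (H6) on the potential `v`: it is `C^k` on each branch interval and extends
to a `C^k` function on `[0,a]` and on `[a,1]`; `v 0` is declared to be the value at `0`
of the extension to `[0,a]`. -/
structure HypV (a : ℝ) (v : ℝ → ℝ) (k : ℕ∞) : Prop where
  ext0 : ∃ v0 : ℝ → ℝ, ContDiffOn ℝ k v0 (Set.Icc 0 a) ∧ Set.EqOn v v0 (Set.Ioo 0 a) ∧ v 0 = v0 0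
  ext1 : ∃ v1 : ℝ → ℝ, ContDiffOn ℝ k v1 (Set.Icc a 1) ∧ Set.EqOn v v1 (Set.Ioo a 1)

/-- Hypothesis (H7): `∑_n ‖e^{w∘φ_n}‖_h (1 + ‖φ_n‖_h^h) ≤ c_k` for all `h ≤ k`. -/
def H7 (T : ℝ → ℝ) (a : ℝ) (ψ₀ ψ₁ v : ℝ → ℝ) (k : ℕ) (ck : ℝ) : Prop :=
  ∀ h : ℕ, h ≤ k →
    Summable (fun n : ℕ =>
      nrm h (fun x => Real.exp (indw T a v (phib ψ₀ ψ₁ (n + 1) x))) *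
        (1 + nrm h (phib ψ₀ ψ₁ (n + 1)) ^ h)) ∧
    (∑' n : ℕ,
      nrm h (fun x => Real.exp (indw T a v (phib ψ₀ ψ₁ (n + 1) x))) *
        (1 + nrm h (phib ψ₀ ψ₁ (n + 1)) ^ h)) ≤ ck

/-- Composition `φ_β = φ_{β₁} ∘ ⋯ ∘ φ_{β_m}` along a list `β` of branch indices. -/
def phibList (ψ₀ ψ₁ : ℝ → ℝ) : List ℕ → ℝ → ℝ
  | [], x => x
  | n :: l, x => phib ψ₀ ψ₁ n (phibList ψ₀ ψ₁ l x)

/-- The weight `W_β(x) = exp (∑_{j=1}^m w(φ_{β_j  … β_m}(x)))`. -/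
def Wb (T : ℝ → ℝ) (a : ℝ) (ψ₀ ψ₁ v : ℝ → ℝ) : List ℕ → ℝ → ℝ
  | [], _ => 1
  | n :: l, x =>
      Real.exp (indw T a v (phib ψ₀ ψ₁ n (phibList ψ₀ ψ₁ l x))) * Wb T a ψ₀ ψ₁ v l x

/-- `Λ_m(z) = sup_{x ∈ (0,1)} ∑_{β ∈ ℕ_{≥1}^m} |z|^{|β|} W_β(x)`, as a function of `|z|`. -/
noncomputable def Lam (T : ℝ → ℝ) (a : ℝ) (ψ₀ ψ₁ v : ℝ → ℝ) (m : ℕ) (zn : ℝ) : ℝ :=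
  sSup ((fun x => ∑' β : Fin m → ℕ,
      zn ^ (m + ∑ i, β i) * Wb T a ψ₀ ψ₁ v (List.ofFn fun i => β i + 1) x) '' Set.Ioo (0 : ℝ) 1)


section Aux

variable {T : ℝ → ℝ} {a : ℝ} {ψ₀ ψ₁ : ℝ → ℝ} {r : ℕ∞} {c α ε ρ : ℝ}

lemma Hyp.diffAt (hT : Hyp T a ψ₀ ψ₁ r c α ε ρ) {x : ℝ} (hx : x ∈ Set.Ioo 0 a) :
    DifferentiableAt ℝ T x := by
  have h1 : (1 : WithTop ℕ∞) ≤ (r : WithTop ℕ∞) := by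
    exact_mod_cast le_trans (by norm_num : (1:ℕ∞) ≤ 2) hT.hr
  have h2 : DifferentiableOn ℝ T (Set.Ioo 0 a) :=
    (hT.smooth0.mono Set.Ioo_subset_Ioc_self).differentiableOn (ne_of_gt (lt_of_lt_of_le zero_lt_one h1))
  exact h2.differentiableAt (isOpen_Ioo.mem_nhds hx)

lemma Hyp.deriv_gt_one (hT : Hyp T a ψ₀ ψ₁ r c α ε ρ) {x : ℝ} (hx : x ∈ Set.Ioo 0 a) :
    1 < deriv T x := by
  rcases lt_or_ge x ε with hxε | hxε
  · have hev : ∀ᶠ z in nhdsWithin 0 (Set.Ioi 0), (1:ℝ)/2 < (deriv T z - 1) / (c * z ^ α) :=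
      hT.asymp.eventually (eventually_gt_nhds (by norm_num))
    have hmem : Set.Ioo (0:ℝ) x ∈ nhdsWithin 0 (Set.Ioi 0) :=
      Ioo_mem_nhdsGT_of_mem ⟨le_refl 0, hx.1⟩
    obtain ⟨z, hzev, hzI⟩ := (hev.and (eventually_of_mem hmem fun z hz => hz)).exists
    have hq : 0 < c * z ^ α := mul_pos hT.hc (Real.rpow_pos_of_pos hzI.1 α)
    have h3 : 0 < deriv T z - 1 := by
      have h := mul_pos (lt_trans one_half_pos hzev) hq
      rwa [div_mul_cancel₀ _ (ne_of_gt hq)] at h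
    have h4 : deriv T z < deriv T x :=
      hT.dmono ⟨hzI.1, lt_trans hzI.2 hxε⟩ ⟨hx.1, hxε⟩ hzI.2
    linarith
  · have hρ := hT.expand x (Or.inl ⟨hxε, hx.2⟩)
    have hd : 0 ≤ deriv T x := by
      have hda : HasDerivAt T (deriv T x) x := (hT.diffAt hx).hasDerivAt
      have hs : Tendsto (slope T x) (nhdsWithin x {x}ᶜ) (𝓝 (deriv T x)) :=
        hasDerivAt_iff_tendsto_slope.mp hda
      have hs' : Tendsto (slope T x) (nhdsWithin x (Set.Ioi x)) (𝓝 (deriv T x)) :=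
        hs.mono_left (nhdsWithin_mono x fun y hy =>
          Set.mem_compl_singleton_iff.mpr (ne_of_gt hy))
      refine ge_of_tendsto hs' ?_
      filter_upwards [Ioo_mem_nhdsGT_of_mem ⟨le_refl x, hx.2⟩] with y hy
      have hTxy : T x < T y := hT.mono0 hx ⟨lt_trans hx.1 hy.1, hy.2⟩ hy.1
      rw [slope_def_field]
      exact div_nonneg (by linarith) (by linarith [hy.1])
    calc (1:ℝ) < ρ := hT.hρ
      _ ≤ |deriv T x| := hρ
      _ = deriv T x := abs_of_nonneg hd

lemma Hyp.lt_self_T (hT : Hyp T a ψ₀ ψ₁ r c α ε ρ) {x : ℝ} (hx : x ∈ Set.Ioo 0 a) :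
    x < T x := by
  have hg : ∀ u w : ℝ, 0 < u → u < w → w < a → T u - u < T w - w := by
    intro u w hu huw hwa
    have hsub : Set.Icc u w ⊆ Set.Ioc 0 a := fun t ht =>
      ⟨lt_of_lt_of_le hu ht.1, le_trans ht.2 (le_of_lt hwa)⟩
    have hcont : ContinuousOn (fun t => T t - t) (Set.Icc u w) :=
      (hT.smooth0.continuousOn.mono hsub).sub continuousOn_id
    have hderiv : ∀ t ∈ interior (Set.Icc u w), 0 < deriv (fun t => T t - t) t := by
      intro t ht
      rw [interior_Icc] at ht
      have ht' : t ∈ Set.Ioo 0 a := ⟨lt_trans hu ht.1, lt_trans ht.2 hwa⟩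
      have hdt : deriv (fun t => T t - t) t = deriv T t - 1 := by
        have := ((hT.diffAt ht').hasDerivAt.sub (hasDerivAt_id t)).deriv
        exact this
      rw [hdt]; linarith [hT.deriv_gt_one ht']
    exact strictMonoOn_of_deriv_pos (convex_Icc u w) hcont hderiv
      (Set.left_mem_Icc.mpr (le_of_lt huw)) (Set.right_mem_Icc.mpr (le_of_lt huw)) huw
  have hdiff0 : DifferentiableWithinAt ℝ T (Set.Icc 0 1) 0 := by
    by_contra h
    have h0 := derivWithin_zero_of_not_differentiableWithinAt h
    rw [hT.dT0] at h0; exact one_ne_zero h0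
  have hT0 : Tendsto T (nhdsWithin 0 (Set.Ioi 0)) (𝓝 0) := by
    have h1 : Tendsto T (nhdsWithin 0 (Set.Icc 0 1)) (𝓝 (T 0)) := hdiff0.continuousWithinAt
    rw [hT.fix0] at h1
    have h2 : nhdsWithin (0:ℝ) (Set.Ioi 0) = nhdsWithin 0 (Set.Ioc 0 1) :=
      (nhdsWithin_Ioc_eq_nhdsGT zero_lt_one).symm
    rw [h2]
    exact h1.mono_left (nhdsWithin_mono 0 Set.Ioc_subset_Icc_self)
  have hgnn : ∀ w ∈ Set.Ioo (0:ℝ) a, 0 ≤ T w - w := by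
    intro w hw
    have hid : Tendsto (fun u : ℝ => u) (nhdsWithin 0 (Set.Ioi 0)) (𝓝 0) :=
      (continuous_id.tendsto 0).mono_left nhdsWithin_le_nhds
    have hgt : Tendsto (fun u => T u - u) (nhdsWithin 0 (Set.Ioi 0)) (𝓝 0) := by
      simpa using hT0.sub hid
    refine le_of_tendsto hgt ?_
    filter_upwards [Ioo_mem_nhdsGT_of_mem ⟨le_refl 0, hw.1⟩] with u hu
    exact le_of_lt (hg u w hu.1 hu.2 hw.2)
  have h2 : T (x/2) - x/2 < T x - x := hg (x/2) x (by linarith [hx.1]) (by linarith [hx.1]) hx.2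
  have h3 : 0 ≤ T (x/2) - x/2 := hgnn _ ⟨by linarith [hx.1], by linarith [hx.1, hx.2]⟩
  linarith

lemma Hyp.iter_mem01 (hT : Hyp T a ψ₀ ψ₁ r c α ε ρ) {y : ℝ} (hy : y ∈ Set.Ioo (0:ℝ) 1) :
    ∀ i, ψ₀^[i] y ∈ Set.Ioo (0:ℝ) 1 := by
  intro i
  induction i with
  | zero => simpa using hy
  | succ n ih =>
    rw [Function.iterate_succ_apply']
    have h := (hT.inv0 _ ih).1
    exact ⟨h.1, lt_trans h.2 hT.ha.2⟩

lemma Hyp.iter_mem (hT : Hyp T a ψ₀ ψ₁ r c α ε ρ) {y : ℝ} (hy : y ∈ Set.Ioo (0:ℝ) 1) :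
    ∀ i, ψ₀^[i+1] y ∈ Set.Ioo 0 a := by
  intro i; rw [Function.iterate_succ_apply']
  exact (hT.inv0 _ (hT.iter_mem01 hy i)).1

lemma Hyp.T_iter (hT : Hyp T a ψ₀ ψ₁ r c α ε ρ) {y : ℝ} (hy : y ∈ Set.Ioo (0:ℝ) 1) (i : ℕ) :
    T (ψ₀^[i+1] y) = ψ₀^[i] y := by
  rw [Function.iterate_succ_apply']
  exact (hT.inv0 _ (hT.iter_mem01 hy i)).2

lemma Hyp.Titer (hT : Hyp T a ψ₀ ψ₁ r c α ε ρ) {y : ℝ} (hy : y ∈ Set.Ioo (0:ℝ) 1) :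
    ∀ j i : ℕ, j ≤ i → T^[j] (ψ₀^[i] y) = ψ₀^[i-j] y := by
  intro j
  induction j with
  | zero => intro i _; simp
  | succ m ih =>
    intro i hji
    obtain ⟨i', rfl⟩ : ∃ i', i = i' + 1 := ⟨i - 1, by omega⟩
    rw [Function.iterate_succ_apply, hT.T_iter hy i', ih i' (by omega)]
    congr 1; omega

lemma Hyp.tau_phib (hT : Hyp T a ψ₀ ψ₁ r c α ε ρ) {x : ℝ} (hx : x ∈ Set.Ioo (0:ℝ) 1) (n : ℕ) :
    tau T a (phib ψ₀ ψ₁ (n+1) x) = n := by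
  have hy : ψ₁ x ∈ Set.Ioo a 1 := (hT.inv1 x hx).1
  have hy01 : ψ₁ x ∈ Set.Ioo (0:ℝ) 1 := ⟨lt_trans hT.ha.1 hy.1, hy.2⟩
  have hphib : phib ψ₀ ψ₁ (n+1) x = ψ₀^[n] (ψ₁ x) := by simp [phib]
  have hmemn : T^[n] (phib ψ₀ ψ₁ (n+1) x) ∈ Set.Ioo a 1 := by
    rw [hphib, hT.Titer hy01 n n le_rfl]; simpa using hy
  unfold tau
  refine le_antisymm (Nat.sInf_le hmemn) (le_csInf ⟨n, hmemn⟩ ?_)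
  intro b hb
  by_contra hbn
  push_neg at hbn
  have hmb : T^[b] (phib ψ₀ ψ₁ (n+1) x) ∈ Set.Ioo 0 a := by
    rw [hphib, hT.Titer hy01 b n (by omega)]
    obtain ⟨m, hm⟩ : ∃ m, n - b = m + 1 := ⟨n - b - 1, by omega⟩
    rw [hm]; exact hT.iter_mem hy01 m
  have hb' : T^[b] (phib ψ₀ ψ₁ (n+1) x) ∈ Set.Ioo a 1 := hb
  linarith [hmb.2, hb'.1]

lemma Hyp.indw_phib (hT : Hyp T a ψ₀ ψ₁ r c α ε ρ) (v : ℝ → ℝ) {x : ℝ}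
    (hx : x ∈ Set.Ioo (0:ℝ) 1) (n : ℕ) :
    indw T a v (phib ψ₀ ψ₁ (n+1) x) = ∑ i ∈ Finset.range (n+1), v (ψ₀^[i] (ψ₁ x)) := by
  have hy : ψ₁ x ∈ Set.Ioo a 1 := (hT.inv1 x hx).1
  have hy01 : ψ₁ x ∈ Set.Ioo (0:ℝ) 1 := ⟨lt_trans hT.ha.1 hy.1, hy.2⟩
  have hphib : phib ψ₀ ψ₁ (n+1) x = ψ₀^[n] (ψ₁ x) := by simp [phib]
  unfold indw
  rw [hT.tau_phib hx n]
  have h1 : ∀ j ∈ Finset.range (n+1),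
      v (T^[j] (phib ψ₀ ψ₁ (n+1) x)) = v (ψ₀^[n-j] (ψ₁ x)) := by
    intro j hj
    rw [hphib, hT.Titer hy01 j n (by simpa [Nat.lt_succ_iff] using Finset.mem_range.mp hj)]
  rw [Finset.sum_congr rfl h1]
  have h2 := Finset.sum_range_reflect (fun i => v (ψ₀^[i] (ψ₁ x))) (n+1)
  simpa using h2

end Aux

/-- Remark 2.4: if `∑_{n ≥ 1} sup_{x ∈ (0,1)} e^{w(φ_n(x))} < ∞` (in particular under (H7)),
then `v(0) ≤ 0`, where `v(0)` is the value at `0` of the `C^k` extension of `v|_{J₀}` to `[0,a]`. -/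
theorem statement5 (T : ℝ → ℝ) (a : ℝ) (ψ₀ ψ₁ : ℝ → ℝ) (r : ℕ∞) (c α ε ρ : ℝ)
    (hT : Hyp T a ψ₀ ψ₁ r c α ε ρ) (v : ℝ → ℝ) (k : ℕ∞) (hk : k < r) (hv : HypV a v k)
    (hsum : Summable (fun n : ℕ =>
      sSup ((fun x => Real.exp (indw T a v (phib ψ₀ ψ₁ (n + 1) x))) '' Set.Ioo (0 : ℝ) 1))) :
    v 0 ≤ 0 := by
  by_contra hneg
  push_neg at hneg
  obtain ⟨v0, hv0c, hv0e, hv00⟩ := hv.ext0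
  obtain ⟨v1, hv1c, hv1e⟩ := hv.ext1
  have ha0 := hT.ha.1
  have ha1 := hT.ha.2
  -- uniform upper bound on v on (0,a) ∪ (a,1)
  obtain ⟨M0, hM0⟩ : ∃ M, M ∈ upperBounds (v0 '' Set.Icc 0 a) :=
    isCompact_Icc.bddAbove_image hv0c.continuousOn
  obtain ⟨M1, hM1⟩ : ∃ M, M ∈ upperBounds (v1 '' Set.Icc a 1) :=
    isCompact_Icc.bddAbove_image hv1c.continuousOn
  have hvM : ∀ z : ℝ, z ∈ Set.Ioo 0 a ∪ Set.Ioo a 1 → v z ≤ max M0 M1 := by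
    intro z hz
    rcases hz with hz | hz
    · rw [hv0e hz]
      exact le_trans (hM0 (Set.mem_image_of_mem _ (Set.Ioo_subset_Icc_self hz))) (le_max_left _ _)
    · rw [hv1e hz]
      exact le_trans (hM1 (Set.mem_image_of_mem _ (Set.Ioo_subset_Icc_self hz))) (le_max_right _ _)
  have hxa : a ∈ Set.Ioo (0:ℝ) 1 := hT.ha
  have hy1 : ψ₁ a ∈ Set.Ioo a 1 := (hT.inv1 a hxa).1
  have hy1' : ψ₁ a ∈ Set.Ioo (0:ℝ) 1 := ⟨lt_trans ha0 hy1.1, hy1.2⟩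
  set y : ℕ → ℝ := fun i => ψ₀^[i] (ψ₁ a) with hydef
  have hy01 : ∀ i, y i ∈ Set.Ioo (0:ℝ) 1 := hT.iter_mem01 hy1'
  have hy0a : ∀ i, y (i+1) ∈ Set.Ioo 0 a := hT.iter_mem hy1'
  have hTy : ∀ i, T (y (i+1)) = y i := hT.T_iter hy1'
  have hanti : ∀ i, y (i+1) < y i := by
    intro i
    have h := hT.lt_self_T (hy0a i)
    rwa [hTy i] at h
  have hAnti : Antitone y := antitone_nat_of_succ_le fun i => le_of_lt (hanti i)
  have hbdd : BddBelow (Set.range y) := ⟨0, by rintro _ ⟨i, rfl⟩; exact le_of_lt (hy01 i).1⟩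
  have hlim : Tendsto y atTop (𝓝 (⨅ i, y i)) := tendsto_atTop_ciInf hAnti hbdd
  have hL0 : 0 ≤ ⨅ i, y i := le_ciInf fun i => le_of_lt (hy01 i).1
  have hLa : (⨅ i, y i) < a := lt_of_le_of_lt (ciInf_le hbdd 1) (hy0a 0).2
  have hLz : (⨅ i, y i) = 0 := by
    by_contra hLne
    have hLpos : 0 < ⨅ i, y i := lt_of_le_of_ne hL0 (Ne.symm hLne)
    have hLmem : (⨅ i, y i) ∈ Set.Ioo 0 a := ⟨hLpos, hLa⟩
    have hcontL : ContinuousAt T (⨅ i, y i) :=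
      (hT.smooth0.continuousOn.continuousWithinAt (Set.Ioo_subset_Ioc_self hLmem)).continuousAt
        (Filter.mem_of_superset (isOpen_Ioo.mem_nhds hLmem) Set.Ioo_subset_Ioc_self)
    have h2 : Tendsto (fun i => y (i+1)) atTop (𝓝 (⨅ i, y i)) :=
      hlim.comp (tendsto_add_atTop_nat 1)
    have h3 : Tendsto (fun i => T (y (i+1))) atTop (𝓝 (T (⨅ i, y i))) :=
      (hcontL.tendsto.comp h2)
    have h4 : Tendsto (fun i => T (y (i+1))) atTop (𝓝 (⨅ i, y i)) := by
      have he : (fun i => T (y (i+1))) = y := funext hTy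
      rw [he]; exact hlim
    have h5 : T (⨅ i, y i) = ⨅ i, y i := tendsto_nhds_unique h3 h4
    have h6 := hT.lt_self_T hLmem
    rw [h5] at h6; exact lt_irrefl _ h6
  rw [hLz] at hlim
  -- v is bigger than (v 0)/2 near 0
  have hcv0 : ContinuousWithinAt v0 (Set.Icc 0 a) 0 :=
    hv0c.continuousOn.continuousWithinAt (Set.left_mem_Icc.mpr (le_of_lt ha0))
  have hev : ∀ᶠ z in nhdsWithin 0 (Set.Icc 0 a), v 0 / 2 < v0 z := by
    refine hcv0 (Ioi_mem_nhds ?_)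
    rw [← hv00]; linarith
  obtain ⟨η, hηpos, hη⟩ := Metric.mem_nhdsWithin_iff.mp hev
  have hev2 : ∀ᶠ i in atTop, y i < η := hlim.eventually (eventually_lt_nhds hηpos)
  obtain ⟨I, hI⟩ := eventually_atTop.mp hev2
  have hlow : ∀ i, I + 1 ≤ i → v 0 / 2 < v (y i) := by
    intro i hi
    obtain ⟨m, rfl⟩ : ∃ m, i = m + 1 := ⟨i - 1, by omega⟩
    have hmem := hy0a m
    have hz : y (m+1) ∈ Metric.ball (0:ℝ) η ∩ Set.Icc 0 a := by
      constructor
      · rw [Metric.mem_ball, Real.dist_eq, sub_zero, abs_of_pos hmem.1]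
        exact hI _ (by omega)
      · exact ⟨le_of_lt hmem.1, le_of_lt hmem.2⟩
    have h := hη hz
    rwa [hv0e hmem]
  -- membership of orbit points
  have hmemv : ∀ x : ℝ, x ∈ Set.Ioo (0:ℝ) 1 → ∀ i : ℕ,
      ψ₀^[i] (ψ₁ x) ∈ Set.Ioo 0 a ∪ Set.Ioo a 1 := by
    intro x hx i
    have hx1 : ψ₁ x ∈ Set.Ioo a 1 := (hT.inv1 x hx).1
    have hx1' : ψ₁ x ∈ Set.Ioo (0:ℝ) 1 := ⟨lt_trans ha0 hx1.1, hx1.2⟩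
    cases i with
    | zero => exact Or.inr (by simpa using hx1)
    | succ m => exact Or.inl (hT.iter_mem hx1' m)
  -- upper bound for the sup terms
  have hub : ∀ n : ℕ, ∀ x ∈ Set.Ioo (0:ℝ) 1,
      Real.exp (indw T a v (phib ψ₀ ψ₁ (n + 1) x)) ≤ Real.exp ((n+1) * max M0 M1) := by
    intro n x hx
    apply Real.exp_le_exp.mpr
    rw [hT.indw_phib v hx n]
    calc ∑ i ∈ Finset.range (n+1), v (ψ₀^[i] (ψ₁ x))
        ≤ ∑ _i ∈ Finset.range (n+1), max M0 M1 :=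
          Finset.sum_le_sum fun i _ => hvM _ (hmemv x hx i)
      _ = (n+1) * max M0 M1 := by
          rw [Finset.sum_const, Finset.card_range, nsmul_eq_mul]; push_cast; ring
  have hge : ∀ n : ℕ, Real.exp (indw T a v (phib ψ₀ ψ₁ (n + 1) a)) ≤
      sSup ((fun x => Real.exp (indw T a v (phib ψ₀ ψ₁ (n + 1) x))) '' Set.Ioo (0:ℝ) 1) := by
    intro n
    refine le_csSup ⟨Real.exp ((n+1) * max M0 M1), ?_⟩ (Set.mem_image_of_mem _ hxa)
    rintro _ ⟨x, hx, rfl⟩; exact hub n x hx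
  -- lower bound for the partial sums
  have hSn : ∀ n : ℕ, indw T a v (phib ψ₀ ψ₁ (n+1) a) = ∑ i ∈ Finset.range (n+1), v (y i) :=
    fun n => hT.indw_phib v hxa n
  have hsplit : ∀ n : ℕ, I + 1 ≤ n + 1 →
      (∑ i ∈ Finset.range (I+1), v (y i)) + (↑(n + 1 - (I+1)) : ℝ) * (v 0 / 2)
        ≤ ∑ i ∈ Finset.range (n+1), v (y i) := by
    intro n hn
    rw [Finset.range_eq_Ico, Finset.range_eq_Ico, ← Finset.sum_Ico_consecutive _ (Nat.zero_le (I+1)) hn]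
    have h2 : (↑(n+1-(I+1)) : ℝ) * (v 0 / 2) ≤ ∑ i ∈ Finset.Ico (I+1) (n+1), v (y i) := by
      calc (↑(n+1-(I+1)) : ℝ) * (v 0 / 2) = ∑ _i ∈ Finset.Ico (I+1) (n+1), (v 0 / 2) := by
            rw [Finset.sum_const, Nat.card_Ico, nsmul_eq_mul]
        _ ≤ ∑ i ∈ Finset.Ico (I+1) (n+1), v (y i) :=
            Finset.sum_le_sum fun i hi => le_of_lt (hlow i (Finset.mem_Ico.mp hi).1)
    have h1 : (∑ i ∈ Finset.range (I+1), v (y i)) = ∑ i ∈ Finset.Ico 0 (I+1), v (y i) := by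
      rw [Finset.range_eq_Ico]
    linarith
  -- final contradiction
  have htend0 := hsum.tendsto_atTop_zero
  obtain ⟨N₁, hN₁⟩ := eventually_atTop.mp (htend0.eventually (eventually_lt_nhds one_pos))
  obtain ⟨N₂, hN₂⟩ := exists_nat_ge ((-(∑ i ∈ Finset.range (I+1), v (y i))) / (v 0 / 2))
  set n := max N₁ (I + 1 + N₂) with hndef
  have h1 : sSup ((fun x => Real.exp (indw T a v (phib ψ₀ ψ₁ (n + 1) x))) '' Set.Ioo (0:ℝ) 1)
      < 1 := hN₁ n (le_max_left _ _)
  have hpos2 : (0:ℝ) < v 0 / 2 := by linarith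
  have h2 : (0:ℝ) ≤ ∑ i ∈ Finset.range (n+1), v (y i) := by
    have hnge : I + 1 + N₂ ≤ n := le_max_right _ _
    have hcard : N₂ ≤ n + 1 - (I+1) := by omega
    have hge2 : (N₂:ℝ) * (v 0 / 2) ≤ (↑(n+1-(I+1)):ℝ) * (v 0 / 2) := by
      apply mul_le_mul_of_nonneg_right _ (le_of_lt hpos2)
      exact_mod_cast hcard
    have h3 : -(∑ i ∈ Finset.range (I+1), v (y i)) ≤ (N₂:ℝ) * (v 0 / 2) := by
      rw [div_le_iff₀ hpos2] at hN₂
      linarith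
    linarith [hsplit n (by omega)]
  have h3 : (1:ℝ) ≤ Real.exp (indw T a v (phib ψ₀ ψ₁ (n+1) a)) := by
    rw [hSn n]; exact Real.one_le_exp h2
  linarith [hge n]

end
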